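/- The formal power series identity log(x/(1 − e^{−x})) − x/2 = Σ_{k≥1} 2·ζ(2k) · x^{2k} / (2k·(2πi)^{2k}) holds, where ζ is the Riemann zeta function. -/

import Mathlib

open PowerSeries

noncomputable section
namespace ToddAux

lemma derivative_exp' : PowerSeries.derivative ℂ (exp ℂ) = exp ℂ := by
  ext n
  rw [PowerSeries.coeff_derivative, coeff_exp, coeff_exp]
  have h : ((n : ℂ) + 1) = algebraMap ℚ ℂ ((n : ℚ) + 1) := by push_cast; ring
  rw [h, ← map_mul]
  congr 1
  have : ((n+1).factorial : ℚ) ≠ 0 := Nat.cast_ne_zero.mpr (n+1).factorial_ne_zero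
  have : (n.factorial : ℚ) ≠ 0 := Nat.cast_ne_zero.mpr n.factorial_ne_zero
  field_simp [Nat.factorial_succ]
  rw [Nat.factorial_succ]; push_cast; ring

lemma exp_sub_one_ne_zero : (exp ℂ - 1) ≠ 0 := by
  intro h
  have := congrArg (PowerSeries.coeff 1) h
  simp [coeff_exp] at this

lemma one_sub_E_ne_zero : (1 - rescale (-1 : ℂ) (exp ℂ)) ≠ 0 := by
  intro h
  have := congrArg (PowerSeries.coeff 1) h
  simp [coeff_rescale, coeff_exp] at this

lemma b'_one_sub : bernoulli'PowerSeries ℂ * (1 - rescale (-1 : ℂ) (exp ℂ)) = X := by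
  have h1 := bernoulli'PowerSeries_mul_exp_sub_one ℂ
  have h2 : exp ℂ * rescale (-1 : ℂ) (exp ℂ) = 1 := exp_mul_exp_neg_eq_one
  have := congrArg (· * rescale (-1 : ℂ) (exp ℂ)) h1
  calc bernoulli'PowerSeries ℂ * (1 - rescale (-1 : ℂ) (exp ℂ))
      = bernoulli'PowerSeries ℂ * (exp ℂ * rescale (-1:ℂ) (exp ℂ) - rescale (-1:ℂ) (exp ℂ)) := by
        rw [h2]
    _ = bernoulli'PowerSeries ℂ * (exp ℂ - 1) * rescale (-1:ℂ) (exp ℂ) := by ring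
    _ = X * exp ℂ * rescale (-1:ℂ) (exp ℂ) := by rw [h1]
    _ = X * (exp ℂ * rescale (-1:ℂ) (exp ℂ)) := by ring
    _ = X := by rw [h2, mul_one]

lemma key : bernoulli'PowerSeries ℂ * (1 - bernoulliPowerSeries ℂ)
    = X * PowerSeries.derivative ℂ (bernoulli'PowerSeries ℂ) := by
  have h1 := bernoulli'PowerSeries_mul_exp_sub_one ℂ
  have h2 := bernoulliPowerSeries_mul_exp_sub_one ℂ
  set b' := bernoulli'PowerSeries ℂ
  set bP := bernoulliPowerSeries ℂ
  set e := exp ℂ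
  set db' := PowerSeries.derivative ℂ b'
  have hA : b' * e + (e - 1) * db' = e + X * e := by
    have := congrArg (PowerSeries.derivative ℂ) h1
    rw [Derivation.leibniz, Derivation.leibniz, map_sub, Derivation.map_one_eq_zero,
      derivative_exp', derivative_X, smul_eq_mul, smul_eq_mul, smul_eq_mul, smul_eq_mul,
      sub_zero] at this
    linear_combination this
  apply mul_right_cancel₀ exp_sub_one_ne_zero
  linear_combination (X + 1) * h1 - X * hA - b' * h2

end ToddAux
end

noncomputable section
namespace ToddAux
open Real Complex

lemma coeff_goal (m : ℕ) (hm : m ≠ 0) :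
    ((if m ≠ 0 ∧ Even m then
        2 * riemannZeta m / ((m : ℂ) * (2 * (Real.pi : ℂ) * Complex.I) ^ m) else 0)
      + (1/2 : ℂ) * (if m = 1 then 1 else 0)) * ((m : ℂ) + 0)
    = -(algebraMap ℚ ℂ) (bernoulli m / m.factorial) := by
  rw [add_zero, eq_ratCast (algebraMap ℚ ℂ), Rat.cast_div, Rat.cast_natCast]
  by_cases he : Even m
  · rcases he with ⟨k, hk⟩
    have hk2 : m = 2 * k := by omega
    have hk0 : k ≠ 0 := by omega
    subst hk2
    rw [if_pos ⟨hm, ⟨k, hk⟩⟩, if_neg (by omega)]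
    have hz := riemannZeta_two_mul_nat (k := k) hk0
    push_cast
    have hI : (2 * (Real.pi : ℂ) * Complex.I) ^ (2 * k)
        = (-1) ^ k * 2 ^ (2 * k) * (Real.pi : ℂ) ^ (2 * k) := by
      rw [pow_mul, show (2 * (Real.pi : ℂ) * Complex.I) ^ 2
          = -(2 ^ 2 * (Real.pi : ℂ) ^ 2) by rw [mul_pow, mul_pow, Complex.I_sq]; ring,
        neg_pow, mul_pow, ← pow_mul, ← pow_mul, mul_assoc]
    have h2 : (2 : ℂ) ^ (2 * k) = 2 * 2 ^ (2 * k - 1) := by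
      rw [← pow_succ']; congr 1; omega
    have hpi : (Real.pi : ℂ) ≠ 0 := by
      exact_mod_cast Complex.ofReal_ne_zero.mpr Real.pi_ne_zero
    have hfac : ((2 * k).factorial : ℂ) ≠ 0 := Nat.cast_ne_zero.mpr (2 * k).factorial_ne_zero
    have hk0' : (k : ℂ) ≠ 0 := Nat.cast_ne_zero.mpr hk0
    have hzP : riemannZeta (2 * (k : ℂ)) = -((2 * (Real.pi : ℂ) * Complex.I) ^ (2 * k))
        * ((bernoulli (2 * k) : ℂ)) / (2 * ((2 * k).factorial : ℂ)) := by
      rw [hz, hI, h2, pow_succ]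
      field_simp
    have hP : (2 * (Real.pi : ℂ) * Complex.I) ^ (2 * k) ≠ 0 :=
      pow_ne_zero _ (by simp [Complex.I_ne_zero, hpi])
    rw [hzP]
    field_simp
    ring
  · by_cases h1 : m = 1
    · subst h1
      norm_num [bernoulli_one]
    · rw [if_neg (by tauto), if_neg h1]
      have hb : bernoulli m = 0 := by
        rw [bernoulli_eq_bernoulli'_of_ne_one h1]
        exact bernoulli'_eq_zero_of_odd (Nat.odd_iff.mpr (Nat.not_even_iff.mp he)) (by omega)
      simp [hb]

end ToddAux
end

lemma coeff_goal' (n : ℕ) :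
    ((if n + 1 ≠ 0 ∧ Even (n + 1) then
        2 * riemannZeta ((n : ℂ) + 1) / (((n : ℂ) + 1) * (2 * (Real.pi : ℂ) * Complex.I) ^ (n + 1))
      else 0) + 1 / 2 * (if n = 0 then 1 else 0)) * ((n : ℂ) + 1)
    = -(((bernoulli (n + 1) : ℚ) : ℂ) / (((n + 1).factorial : ℕ) : ℂ)) := by
  have h := ToddAux.coeff_goal (n + 1) n.succ_ne_zero
  rw [eq_ratCast (algebraMap ℚ ℂ), Rat.cast_div, Rat.cast_natCast, add_zero] at h
  simp only [show (n + 1 = 1) ↔ (n = 0) by omega] at h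
  push_cast at h ⊢
  exact h


/-!
STATEMENT 3.  The formal power series identity
  log (x / (1 − e^{−x})) − x/2 = ∑_{k ≥ 1} 2 ζ(2k) x^{2k} / (2k (2πi)^{2k})
in ℂ[[x]].  The Todd series `Q = x/(1 − e^{−x})` is characterized as the (unique)
power series with `Q · (1 − e^{−X}) = X` (its constant term is then 1), and its
formal logarithm `L = log Q` is characterized by `L(0) = 0` together with the
logarithmic-derivative equation `Q · L' = Q'`.  The right-hand side is the series
whose coefficient of `x^n` is `2 ζ(n) / (n (2πi)^n)` for even `n ≥ 2` and `0`
otherwise.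
-/
theorem log_todd_series_zeta
    (Q L : PowerSeries ℂ)
    (hQ : Q * (1 - rescale (-1) (exp ℂ)) = X)
    (hL0 : constantCoeff L = 0)
    (hL : Q * (PowerSeries.derivative ℂ L) = PowerSeries.derivative ℂ Q) :
    L - PowerSeries.C (1 / 2 : ℂ) * X =
      PowerSeries.mk (fun n =>
        if n ≠ 0 ∧ Even n then
          2 * riemannZeta n / ((n : ℂ) * (2 * (Real.pi : ℂ) * Complex.I) ^ n)
        else 0) := by
  have hQb : Q = bernoulli'PowerSeries ℂ :=
    mul_right_cancel₀ ToddAux.one_sub_E_ne_zero (hQ.trans ToddAux.b'_one_sub.symm)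
  set R : PowerSeries ℂ := PowerSeries.mk (fun n =>
    if n ≠ 0 ∧ Even n then
      2 * riemannZeta n / ((n : ℂ) * (2 * (Real.pi : ℂ) * Complex.I) ^ n)
    else 0) with hRdef
  set M : PowerSeries ℂ := R + PowerSeries.C (1/2 : ℂ) * X with hMdef
  have hXdM : X * (PowerSeries.derivative ℂ M) = 1 - bernoulliPowerSeries ℂ := by
    ext n
    cases n with
    | zero =>
      simp [bernoulliPowerSeries, bernoulli_zero, coeff_zero_eq_constantCoeff]
    | succ n =>
      rw [PowerSeries.coeff_succ_X_mul, PowerSeries.coeff_derivative, hMdef, hRdef]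
      simp only [map_add, coeff_mk, PowerSeries.coeff_C_mul, PowerSeries.coeff_X,
        bernoulliPowerSeries, map_sub, map_one, PowerSeries.coeff_one,
        Nat.succ_ne_zero, if_false, zero_sub]
      push_cast
      exact coeff_goal' n
  have hQM : Q * (PowerSeries.derivative ℂ M) = PowerSeries.derivative ℂ Q := by
    have hX : (X : PowerSeries ℂ) ≠ 0 := X_ne_zero
    apply mul_left_cancel₀ hX
    calc X * (Q * PowerSeries.derivative ℂ M) = Q * (X * PowerSeries.derivative ℂ M) := by ring
      _ = Q * (1 - bernoulliPowerSeries ℂ) := by rw [hXdM]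
      _ = X * PowerSeries.derivative ℂ Q := by rw [hQb]; exact ToddAux.key
  have hQ0 : Q ≠ 0 := by
    rw [hQb]; intro h
    have := congrArg (PowerSeries.coeff 0) h
    simp [bernoulli'PowerSeries] at this
  have hdLM := mul_left_cancel₀ hQ0 (hL.trans hQM.symm)
  have hLM : L = M := by
    ext n
    cases n with
    | zero =>
      simp only [coeff_zero_eq_constantCoeff, hL0, hMdef, hRdef]
      simp
    | succ n =>
      have h := congrArg (PowerSeries.coeff n) hdLM
      rw [PowerSeries.coeff_derivative, PowerSeries.coeff_derivative] at h
      have hne : ((n : ℂ) + 1) ≠ 0 := n.cast_add_one_ne_zero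
      exact mul_right_cancel₀ hne h
  rw [hLM, hMdef]
  ring
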